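/- Let Q ∈ M(μ,ν) be a martingale measure with countable support S, and suppose x₁ ≠ x₂ in S_X satisfy |Y(x₁) ∩ Y(x₂)| ≥ 3. Then Q is not extremal in M(μ,ν): there exist Q₁ ≠ Q₂ in M(μ,ν) with Q = (Q₁ + Q₂)/2. Explicitly, for y₁ < y₂ < y₃ in the intersection, the perturbation assigning weights +α, -β, +γ at (x₁,y₁),(x₁,y₂),(x₁,y₃) and -α, +β, -γ at (x₂,y₁),(x₂,y₂),(x₂,y₃), with α = β - γ and β(y₁ - y₂) = γ(y₁ - y₃) and γ sufficiently small, preserves both marginals and the martingale property. -/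

import Mathlib

open MeasureTheory Set ENNReal
open scoped Classical

/-- `Q` is a martingale measure with marginals `μ` and `ν`. -/
def IsMartingaleMeasure (μ ν : Measure ℝ) (Q : Measure (ℝ × ℝ)) : Prop :=
  IsProbabilityMeasure Q ∧ Q.map Prod.fst = μ ∧ Q.map Prod.snd = ν ∧
  Integrable (fun p : ℝ × ℝ => p.1) Q ∧ Integrable (fun p : ℝ × ℝ => p.2) Q ∧
  ∀ A : Set ℝ, MeasurableSet A →
    ∫ p in Prod.fst ⁻¹' A, p.2 ∂Q = ∫ p in Prod.fst ⁻¹' A, p.1 ∂Q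

/-- Any function is integrable with respect to a Dirac measure. -/
lemma integrable_dirac_aux {α : Type*} [MeasurableSpace α] [MeasurableSingletonClass α]
    (f : α → ℝ) (a : α) : Integrable f (Measure.dirac a) :=
  (integrable_congr (MeasureTheory.ae_eq_dirac f)).2 (integrable_const _)

/-- A small multiple of a Dirac mass at `p` is dominated by `Q` restricted to `{p}`. -/
lemma smul_dirac_le {α : Type*} [MeasurableSpace α] [MeasurableSingletonClass α]
    {Q : Measure α} {a : ℝ≥0∞} {p : α} (h : a ≤ Q {p}) :
    a • Measure.dirac p ≤ Q.restrict {p} := by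
  rw [Measure.le_iff]
  intro s hs
  rw [Measure.smul_apply, Measure.dirac_apply, Measure.restrict_apply hs]
  by_cases hp : p ∈ s
  · have h1 : s ∩ {p} = {p} := by
      apply Set.inter_eq_self_of_subset_right
      simpa using hp
    simpa [hp, h1] using h
  · simp [hp]

lemma setIntegral_perturb (Q Dm Dp : Measure (ℝ × ℝ)) [IsFiniteMeasure Dm]
    (hle : Dm ≤ Q) (f : ℝ × ℝ → ℝ) (S : Set (ℝ × ℝ)) (hS : MeasurableSet S)
    (hfQ : Integrable f Q) (hfp : Integrable f Dp) (hfm : Integrable f Dm) :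
    ∫ x in S, f x ∂(Q - Dm + Dp)
      = ∫ x in S, f x ∂Q - ∫ x in S, f x ∂Dm + ∫ x in S, f x ∂Dp := by
  have hsub : (Q - Dm) + Dm = Q := Measure.sub_add_cancel_of_le hle
  have hQle : Q - Dm ≤ Q := Measure.sub_le
  have hint : Integrable f ((Q - Dm).restrict S) :=
    hfQ.restrict.mono_measure (Measure.restrict_mono subset_rfl hQle)
  rw [Measure.restrict_add, integral_add_measure hint hfp.restrict]
  have hQd : ∫ x in S, f x ∂Q = ∫ x in S, f x ∂(Q - Dm) + ∫ x in S, f x ∂Dm := by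
    conv_lhs => rw [← hsub]
    rw [Measure.restrict_add, integral_add_measure hint hfm.restrict]
  rw [hQd]; ring

/-- Perturbing a martingale measure by a balanced signed combination keeps it a
martingale measure. -/
lemma perturb_mm (μ ν : Measure ℝ) (Q Dp Dm : Measure (ℝ × ℝ))
    [IsFiniteMeasure Dm] [IsFiniteMeasure Dp]
    (hQ : IsMartingaleMeasure μ ν Q) (hle : Dm ≤ Q)
    (hfst : ∀ s : Set ℝ, MeasurableSet s → Dp (Prod.fst ⁻¹' s) = Dm (Prod.fst ⁻¹' s))
    (hsnd : ∀ s : Set ℝ, MeasurableSet s → Dp (Prod.snd ⁻¹' s) = Dm (Prod.snd ⁻¹' s))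
    (hp1 : Integrable (fun p : ℝ × ℝ => p.1) Dp) (hm1 : Integrable (fun p : ℝ × ℝ => p.1) Dm)
    (hp2 : Integrable (fun p : ℝ × ℝ => p.2) Dp) (hm2 : Integrable (fun p : ℝ × ℝ => p.2) Dm)
    (heq2 : ∀ A : Set ℝ, MeasurableSet A →
      ∫ p in Prod.fst ⁻¹' A, p.2 ∂Dp = ∫ p in Prod.fst ⁻¹' A, p.2 ∂Dm)
    (heq1 : ∀ A : Set ℝ, MeasurableSet A →
      ∫ p in Prod.fst ⁻¹' A, p.1 ∂Dp = ∫ p in Prod.fst ⁻¹' A, p.1 ∂Dm) :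
    IsMartingaleMeasure μ ν (Q - Dm + Dp) := by
  obtain ⟨hprob, hQfst, hQsnd, hQi1, hQi2, hQmart⟩ := hQ
  have happly : ∀ s : Set (ℝ × ℝ), MeasurableSet s → (Q - Dm + Dp) s = Q s - Dm s + Dp s := by
    intro s hs
    rw [Measure.add_apply, Measure.sub_apply hs hle]
  have hleQ : Q - Dm + Dp ≤ Q + Dp := add_le_add_left Measure.sub_le _
  refine ⟨?_, ?_, ?_, ?_, ?_, ?_⟩
  · constructor
    rw [happly univ MeasurableSet.univ]
    have h1 : Dp univ = Dm univ := by
      have := hfst univ MeasurableSet.univ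
      simpa using this
    rw [h1, tsub_add_cancel_of_le (hle univ), hprob.measure_univ]
  · ext s hs
    rw [Measure.map_apply measurable_fst hs, happly _ (measurable_fst hs), hfst s hs,
      tsub_add_cancel_of_le (hle _), ← Measure.map_apply measurable_fst hs, hQfst]
  · ext s hs
    rw [Measure.map_apply measurable_snd hs, happly _ (measurable_snd hs), hsnd s hs,
      tsub_add_cancel_of_le (hle _), ← Measure.map_apply measurable_snd hs, hQsnd]
  · exact (integrable_add_measure.2 ⟨hQi1, hp1⟩).mono_measure hleQ
  · exact (integrable_add_measure.2 ⟨hQi2, hp2⟩).mono_measure hleQ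
  · intro A hA
    have hS : MeasurableSet (Prod.fst ⁻¹' A : Set (ℝ × ℝ)) := measurable_fst hA
    rw [setIntegral_perturb Q Dm Dp hle _ _ hS hQi2 hp2 hm2,
      setIntegral_perturb Q Dm Dp hle _ _ hS hQi1 hp1 hm1,
      heq2 A hA, heq1 A hA, hQmart A hA]
    ring


section Triple

/-- Application of a weighted sum of three Dirac masses. -/
lemma triple_apply (a b c : ℝ≥0∞) (p₁ p₂ p₃ : ℝ × ℝ) (s : Set (ℝ × ℝ)) :
    (a • Measure.dirac p₁ + b • Measure.dirac p₂ + c • Measure.dirac p₃) s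
      = (if p₁ ∈ s then a else 0) + (if p₂ ∈ s then b else 0)
        + (if p₃ ∈ s then c else 0) := by
  simp [Measure.add_apply, Measure.smul_apply, Measure.dirac_apply, Set.indicator_apply,
    mul_ite, smul_eq_mul]

lemma triple_le (Q : Measure (ℝ × ℝ)) (a b c : ℝ≥0∞) (p₁ p₂ p₃ : ℝ × ℝ)
    (h12 : p₁ ≠ p₂) (h13 : p₁ ≠ p₃) (h23 : p₂ ≠ p₃)
    (h1 : a ≤ Q {p₁}) (h2 : b ≤ Q {p₂}) (h3 : c ≤ Q {p₃}) :
    a • Measure.dirac p₁ + b • Measure.dirac p₂ + c • Measure.dirac p₃ ≤ Q := by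
  have d12 : Disjoint ({p₁} : Set (ℝ × ℝ)) {p₂} := by simp [h12]
  have d3 : Disjoint (({p₁} : Set (ℝ × ℝ)) ∪ {p₂}) {p₃} := by
    rw [Set.disjoint_union_left]
    exact ⟨by simp [h13], by simp [h23]⟩
  calc a • Measure.dirac p₁ + b • Measure.dirac p₂ + c • Measure.dirac p₃
      ≤ Q.restrict {p₁} + Q.restrict {p₂} + Q.restrict {p₃} :=
        add_le_add (add_le_add (smul_dirac_le h1) (smul_dirac_le h2)) (smul_dirac_le h3)
    _ = Q.restrict (({p₁} ∪ {p₂}) ∪ {p₃}) := by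
        rw [Measure.restrict_union d3 (measurableSet_singleton _),
          Measure.restrict_union d12 (measurableSet_singleton _)]
    _ ≤ Q := Measure.restrict_le_self

lemma triple_integrable (f : ℝ × ℝ → ℝ) {a b c : ℝ≥0∞} (p₁ p₂ p₃ : ℝ × ℝ)
    (ha : a ≠ ∞) (hb : b ≠ ∞) (hc : c ≠ ∞) :
    Integrable f (a • Measure.dirac p₁ + b • Measure.dirac p₂ + c • Measure.dirac p₃) :=
  integrable_add_measure.2 ⟨integrable_add_measure.2
    ⟨(integrable_dirac_aux f p₁).smul_measure ha, (integrable_dirac_aux f p₂).smul_measure hb⟩,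
    (integrable_dirac_aux f p₃).smul_measure hc⟩

lemma triple_setIntegral (f : ℝ × ℝ → ℝ) {a b c : ℝ≥0∞} (p₁ p₂ p₃ : ℝ × ℝ)
    (ha : a ≠ ∞) (hb : b ≠ ∞) (hc : c ≠ ∞) (S : Set (ℝ × ℝ)) :
    ∫ x in S, f x ∂(a • Measure.dirac p₁ + b • Measure.dirac p₂ + c • Measure.dirac p₃)
      = a.toReal * (if p₁ ∈ S then f p₁ else 0) + b.toReal * (if p₂ ∈ S then f p₂ else 0)
        + c.toReal * (if p₃ ∈ S then f p₃ else 0) := by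
  classical
  have i1 : Integrable f ((a • Measure.dirac p₁).restrict S) :=
    ((integrable_dirac_aux f p₁).smul_measure ha).restrict
  have i2 : Integrable f ((b • Measure.dirac p₂).restrict S) :=
    ((integrable_dirac_aux f p₂).smul_measure hb).restrict
  have i3 : Integrable f ((c • Measure.dirac p₃).restrict S) :=
    ((integrable_dirac_aux f p₃).smul_measure hc).restrict
  rw [Measure.restrict_add, Measure.restrict_add,
    integral_add_measure (integrable_add_measure.2 ⟨i1, i2⟩) i3,
    integral_add_measure i1 i2]
  rw [show (a • Measure.dirac p₁).restrict S = a • (Measure.dirac p₁).restrict S from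
      Measure.restrict_smul a _ S,
    show (b • Measure.dirac p₂).restrict S = b • (Measure.dirac p₂).restrict S from
      Measure.restrict_smul b _ S,
    show (c • Measure.dirac p₃).restrict S = c • (Measure.dirac p₃).restrict S from
      Measure.restrict_smul c _ S]
  rw [integral_smul_measure, integral_smul_measure, integral_smul_measure,
    setIntegral_dirac f p₁ S, setIntegral_dirac f p₂ S, setIntegral_dirac f p₃ S]
  simp [smul_eq_mul]

lemma triple_finite {a b c : ℝ≥0∞} (p₁ p₂ p₃ : ℝ × ℝ)
    (ha : a ≠ ∞) (hb : b ≠ ∞) (hc : c ≠ ∞) :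
    IsFiniteMeasure (a • Measure.dirac p₁ + b • Measure.dirac p₂ + c • Measure.dirac p₃) := by
  constructor
  rw [triple_apply]
  simp only [Set.mem_univ, if_true]
  exact ENNReal.add_lt_top.2 ⟨ENNReal.add_lt_top.2 ⟨ha.lt_top, hb.lt_top⟩, hc.lt_top⟩

end Triple

/-- If a martingale measure `Q` with countable support has two distinct `x`-points
whose fibers share at least three points, `Q` is not extremal: it is the midpoint of
two distinct martingale measures with the same marginals. -/
theorem not_extremal_of_three_common_points
    (μ ν : Measure ℝ) (Q : Measure (ℝ × ℝ))
    (hμpos : μ {x : ℝ | x ≤ 0} = 0) (hνpos : ν {x : ℝ | x ≤ 0} = 0)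
    (hQ : IsMartingaleMeasure μ ν Q)
    (C : Set (ℝ × ℝ)) (hC : C.Countable) (hQC : Q Cᶜ = 0)
    (x₁ x₂ : ℝ) (hx : x₁ ≠ x₂)
    (y₁ y₂ y₃ : ℝ) (h12 : y₁ < y₂) (h23 : y₂ < y₃)
    (hsupp : ∀ i ∈ ({x₁, x₂} : Set ℝ), ∀ j ∈ ({y₁, y₂, y₃} : Set ℝ),
      0 < Q {(i, j)}) :
    ∃ Q₁ Q₂ : Measure (ℝ × ℝ),
      IsMartingaleMeasure μ ν Q₁ ∧ IsMartingaleMeasure μ ν Q₂ ∧ Q₁ ≠ Q₂ ∧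
      Q = (1 / 2 : ℝ≥0∞) • Q₁ + (1 / 2 : ℝ≥0∞) • Q₂ := by
  classical
  haveI hprob : IsProbabilityMeasure Q := hQ.1
  have hQfin : ∀ p : ℝ × ℝ, Q {p} ≠ ∞ := fun p => measure_ne_top Q _
  -- the minimum of the six atom masses
  set m : ℝ≥0∞ := Q {(x₁, y₁)} ⊓ Q {(x₁, y₂)} ⊓ Q {(x₁, y₃)} ⊓ Q {(x₂, y₁)} ⊓ Q {(x₂, y₂)}
      ⊓ Q {(x₂, y₃)} with hm_def
  have hm11 : m ≤ Q {(x₁, y₁)} :=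
    (((inf_le_left.trans inf_le_left).trans inf_le_left).trans inf_le_left).trans inf_le_left
  have hm12 : m ≤ Q {(x₁, y₂)} :=
    (((inf_le_left.trans inf_le_left).trans inf_le_left).trans inf_le_left).trans inf_le_right
  have hm13 : m ≤ Q {(x₁, y₃)} :=
    ((inf_le_left.trans inf_le_left).trans inf_le_left).trans inf_le_right
  have hm21 : m ≤ Q {(x₂, y₁)} := (inf_le_left.trans inf_le_left).trans inf_le_right
  have hm22 : m ≤ Q {(x₂, y₂)} := inf_le_left.trans inf_le_right
  have hm23 : m ≤ Q {(x₂, y₃)} := inf_le_right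
  have hm0 : 0 < m := by
    rw [hm_def]
    simp only [lt_inf_iff]
    refine ⟨⟨⟨⟨⟨?_, ?_⟩, ?_⟩, ?_⟩, ?_⟩, ?_⟩ <;>
      exact hsupp _ (by simp) _ (by simp)
  have hmtop : m ≠ ∞ := ne_top_of_le_ne_top (hQfin _) hm11
  set m' : ℝ := m.toReal with hm'_def
  have hm' : 0 < m' := ENNReal.toReal_pos hm0.ne' hmtop
  have hden : (0 : ℝ) < y₃ - y₁ := by linarith
  set α : ℝ := m' * (y₃ - y₂) / (y₃ - y₁) with hα_def
  set γ : ℝ := m' * (y₂ - y₁) / (y₃ - y₁) with hγ_def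
  have hα : 0 < α := by
    rw [hα_def]; exact div_pos (mul_pos hm' (by linarith)) hden
  have hγ : 0 < γ := by
    rw [hγ_def]; exact div_pos (mul_pos hm' (by linarith)) hden
  have hαm : α ≤ m' := by
    rw [hα_def, div_le_iff₀ hden]
    nlinarith
  have hγm : γ ≤ m' := by
    rw [hγ_def, div_le_iff₀ hden]
    nlinarith
  have hsum : α + γ = m' := by
    rw [hα_def, hγ_def]
    field_simp
    ring
  have hmart : α * y₁ + γ * y₃ = m' * y₂ := by
    rw [hα_def, hγ_def]
    field_simp
    ring
  set a : ℝ≥0∞ := ENNReal.ofReal α with ha_def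
  set b : ℝ≥0∞ := ENNReal.ofReal m' with hb_def
  set c : ℝ≥0∞ := ENNReal.ofReal γ with hc_def
  have hbm : b = m := by rw [hb_def, hm'_def, ENNReal.ofReal_toReal hmtop]
  have ham : a ≤ m := by
    rw [ha_def, ← hbm, hb_def]
    exact ENNReal.ofReal_le_ofReal hαm
  have hcm : c ≤ m := by
    rw [hc_def, ← hbm, hb_def]
    exact ENNReal.ofReal_le_ofReal hγm
  have hbm' : b ≤ m := le_of_eq hbm
  have habc : a + c = b := by
    rw [ha_def, hc_def, hb_def, ← ENNReal.ofReal_add hα.le hγ.le, hsum]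
  have hat : a ≠ ∞ := ENNReal.ofReal_ne_top
  have hbt : b ≠ ∞ := ENNReal.ofReal_ne_top
  have hct : c ≠ ∞ := ENNReal.ofReal_ne_top
  have hatr : a.toReal = α := by rw [ha_def, ENNReal.toReal_ofReal hα.le]
  have hbtr : b.toReal = m' := by rw [hb_def, ENNReal.toReal_ofReal hm'.le]
  have hctr : c.toReal = γ := by rw [hc_def, ENNReal.toReal_ofReal hγ.le]
  -- the two perturbation measures
  set Dp : Measure (ℝ × ℝ) :=
    a • Measure.dirac (x₁, y₁) + b • Measure.dirac (x₂, y₂) + c • Measure.dirac (x₁, y₃)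
    with hDp_def
  set Dm : Measure (ℝ × ℝ) :=
    a • Measure.dirac (x₂, y₁) + b • Measure.dirac (x₁, y₂) + c • Measure.dirac (x₂, y₃)
    with hDm_def
  haveI hfinp : IsFiniteMeasure Dp := triple_finite _ _ _ hat hbt hct
  haveI hfinm : IsFiniteMeasure Dm := triple_finite _ _ _ hat hbt hct
  have hne : ∀ u v : ℝ, ∀ w z : ℝ, u ≠ v → ((u, w) : ℝ × ℝ) ≠ (v, z) := by
    intro u v w z h hc
    exact h (congrArg Prod.fst hc)
  have hne' : ∀ u v : ℝ, ∀ w z : ℝ, w ≠ z → ((u, w) : ℝ × ℝ) ≠ (v, z) := by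
    intro u v w z h hc
    exact h (congrArg Prod.snd hc)
  have hDple : Dp ≤ Q := by
    rw [hDp_def]
    exact triple_le Q a b c _ _ _ (hne _ _ _ _ hx) (hne' _ _ _ _ (by linarith))
      (hne _ _ _ _ hx.symm) (ham.trans' le_rfl |>.trans hm11) (hbm'.trans hm22)
      (hcm.trans hm13)
  have hDmle : Dm ≤ Q := by
    rw [hDm_def]
    exact triple_le Q a b c _ _ _ (hne _ _ _ _ hx.symm) (hne' _ _ _ _ (by linarith))
      (hne _ _ _ _ hx) (ham.trans hm21) (hbm'.trans hm12) (hcm.trans hm23)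
  -- marginal identities
  have hfst : ∀ s : Set ℝ, MeasurableSet s →
      Dp (Prod.fst ⁻¹' s) = Dm (Prod.fst ⁻¹' s) := by
    intro s _
    rw [hDp_def, hDm_def, triple_apply, triple_apply]
    simp only [Set.mem_preimage]
    rw [← habc]
    by_cases h1 : x₁ ∈ s <;> by_cases h2 : x₂ ∈ s <;> simp [h1, h2] <;> ring
  have hsnd : ∀ s : Set ℝ, MeasurableSet s →
      Dp (Prod.snd ⁻¹' s) = Dm (Prod.snd ⁻¹' s) := by
    intro s _
    rw [hDp_def, hDm_def, triple_apply, triple_apply]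
    simp only [Set.mem_preimage]
  -- integral identities
  have heq2 : ∀ A : Set ℝ, MeasurableSet A →
      ∫ p in Prod.fst ⁻¹' A, p.2 ∂Dp = ∫ p in Prod.fst ⁻¹' A, p.2 ∂Dm := by
    intro A _
    rw [hDp_def, hDm_def, triple_setIntegral _ _ _ _ hat hbt hct,
      triple_setIntegral _ _ _ _ hat hbt hct]
    simp only [Set.mem_preimage, hatr, hbtr, hctr]
    by_cases h1 : x₁ ∈ A <;> by_cases h2 : x₂ ∈ A
    · simp [h1, h2]
      try linear_combination hmart
    · simp [h1, h2]
      try linear_combination hmart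
    · simp [h1, h2]
      try linear_combination -hmart
    · simp [h1, h2]
  have heq1 : ∀ A : Set ℝ, MeasurableSet A →
      ∫ p in Prod.fst ⁻¹' A, p.1 ∂Dp = ∫ p in Prod.fst ⁻¹' A, p.1 ∂Dm := by
    intro A _
    rw [hDp_def, hDm_def, triple_setIntegral _ _ _ _ hat hbt hct,
      triple_setIntegral _ _ _ _ hat hbt hct]
    simp only [Set.mem_preimage, hatr, hbtr, hctr]
    by_cases h1 : x₁ ∈ A <;> by_cases h2 : x₂ ∈ A
    · simp [h1, h2]
      try linear_combination (x₁ - x₂) * hsum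
    · simp [h1, h2]
      try linear_combination x₁ * hsum
    · simp [h1, h2]
      try linear_combination (-x₂) * hsum
    · simp [h1, h2]
  have hip1 : Integrable (fun p : ℝ × ℝ => p.1) Dp := triple_integrable _ _ _ _ hat hbt hct
  have him1 : Integrable (fun p : ℝ × ℝ => p.1) Dm := triple_integrable _ _ _ _ hat hbt hct
  have hip2 : Integrable (fun p : ℝ × ℝ => p.2) Dp := triple_integrable _ _ _ _ hat hbt hct
  have him2 : Integrable (fun p : ℝ × ℝ => p.2) Dm := triple_integrable _ _ _ _ hat hbt hct
  refine ⟨Q - Dm + Dp, Q - Dp + Dm, ?_, ?_, ?_, ?_⟩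
  · exact perturb_mm μ ν Q Dp Dm hQ hDmle hfst hsnd hip1 him1 hip2 him2 heq2 heq1
  · exact perturb_mm μ ν Q Dm Dp hQ hDple (fun s hs => (hfst s hs).symm)
      (fun s hs => (hsnd s hs).symm) him1 hip1 him2 hip2
      (fun A hA => (heq2 A hA).symm) (fun A hA => (heq1 A hA).symm)
  · -- the two measures differ at the atom (x₁, y₁)
    intro hcon
    have hDp1 : Dp {((x₁ : ℝ), (y₁ : ℝ))} = a := by
      rw [hDp_def, triple_apply]
      simp [Prod.mk.injEq, hx.symm, (by linarith : y₃ ≠ y₁)]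
    have hDm1 : Dm {((x₁ : ℝ), (y₁ : ℝ))} = 0 := by
      rw [hDm_def, triple_apply]
      simp [Prod.mk.injEq, hx.symm, (by linarith : ¬ y₂ = y₁)]
    have e1 : (Q - Dm + Dp) {((x₁ : ℝ), (y₁ : ℝ))} = Q {((x₁ : ℝ), (y₁ : ℝ))} + a := by
      rw [Measure.add_apply, Measure.sub_apply (measurableSet_singleton _) hDmle, hDm1, hDp1,
        tsub_zero]
    have e2 : (Q - Dp + Dm) {((x₁ : ℝ), (y₁ : ℝ))} = Q {((x₁ : ℝ), (y₁ : ℝ))} - a := by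
      rw [Measure.add_apply, Measure.sub_apply (measurableSet_singleton _) hDple, hDm1, hDp1,
        add_zero]
    have ha0 : a ≠ 0 := by
      rw [ha_def]
      simpa [ENNReal.ofReal_eq_zero, not_le] using hα
    have hlt : Q {((x₁ : ℝ), (y₁ : ℝ))} - a < Q {((x₁ : ℝ), (y₁ : ℝ))} + a :=
      lt_of_le_of_lt tsub_le_self (ENNReal.lt_add_right (hQfin _) ha0)
    rw [hcon, e2] at e1
    exact absurd (e1 ▸ hlt) (lt_irrefl _)
  · -- midpoint identity
    ext s hs
    have h1 : (Q - Dm + Dp) s = Q s - Dm s + Dp s := by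
      rw [Measure.add_apply, Measure.sub_apply hs hDmle]
    have h2 : (Q - Dp + Dm) s = Q s - Dp s + Dm s := by
      rw [Measure.add_apply, Measure.sub_apply hs hDple]
    rw [Measure.add_apply, Measure.smul_apply, Measure.smul_apply, h1, h2, smul_eq_mul,
      smul_eq_mul]
    have hsum2 : (Q s - Dm s + Dp s) + (Q s - Dp s + Dm s) = Q s + Q s := by
      calc (Q s - Dm s + Dp s) + (Q s - Dp s + Dm s)
          = ((Q s - Dm s) + Dm s) + ((Q s - Dp s) + Dp s) := by ring
        _ = Q s + Q s := by
            rw [tsub_add_cancel_of_le (hDmle s), tsub_add_cancel_of_le (hDple s)]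
    rw [← mul_add, hsum2, ← two_mul, ← mul_assoc, one_div,
      ENNReal.inv_mul_cancel two_ne_zero ENNReal.ofNat_ne_top, one_mul]
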